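/- Suppose exponents p_n are chosen by the greedy strategy (maximizing the gap d_n − d_{n−1} between consecutive nonzero base-10 digit positions of 2^(p_n), while preserving the earlier digits modulo 10^(d_{n−1}+1)). Then every nonzero digit b_i of 2^(p_n) beyond the units digit (i ≥ 2) is odd. -/

import Mathlib

/-- Exact 5-adic valuation: `2 ^ (4 * 5 ^ n) = 1 + 5 ^ (n+1) * a` with `5 ∤ a`. -/
private lemma aux_pow_five : ∀ n : ℕ, ∃ a : ℕ, 2 ^ (4 * 5 ^ n) = 1 + 5 ^ (n + 1) * a ∧ ¬ (5 ∣ a) := by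
  intro n
  induction n with
  | zero => exact ⟨3, by norm_num, by norm_num⟩
  | succ n ih =>
    obtain ⟨a, ha, hna⟩ := ih
    refine ⟨a + 5 ^ (n + 1) * (2 * a ^ 2) + 5 ^ (2 * n + 2) * (2 * a ^ 3)
        + 5 ^ (3 * n + 3) * a ^ 4 + 5 ^ (4 * n + 3) * a ^ 5, ?_, ?_⟩
    · have h1 : 4 * 5 ^ (n + 1) = (4 * 5 ^ n) * 5 := by ring
      rw [h1, pow_mul, ha]
      ring
    · intro h
      have d1 : 5 ∣ 5 ^ (n + 1) * (2 * a ^ 2) :=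
        Dvd.dvd.mul_right (dvd_pow_self 5 (Nat.succ_ne_zero n)) _
      have d2 : 5 ∣ 5 ^ (2 * n + 2) * (2 * a ^ 3) :=
        Dvd.dvd.mul_right (dvd_pow_self 5 (by omega)) _
      have d3 : 5 ∣ 5 ^ (3 * n + 3) * a ^ 4 :=
        Dvd.dvd.mul_right (dvd_pow_self 5 (by omega)) _
      have d4 : 5 ∣ 5 ^ (4 * n + 3) * a ^ 5 :=
        Dvd.dvd.mul_right (dvd_pow_self 5 (by omega)) _
      exact hna (by omega)

/-- Binomial approximation: `(1 + m) ^ K ≡ 1 + K * m [MOD m ^ 2]`. -/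
private lemma aux_one_add_pow (m : ℕ) : ∀ K : ℕ, (1 + m) ^ K ≡ 1 + K * m [MOD m ^ 2] := by
  intro K
  induction K with
  | zero => simpa using Nat.ModEq.refl 1
  | succ K ih =>
    have h1 : (1 + m) ^ (K + 1) = (1 + m) ^ K * (1 + m) := pow_succ _ _
    have h2 : (1 + K * m) * (1 + m) = 1 + (K + 1) * m + m ^ 2 * K := by ring
    calc (1 + m) ^ (K + 1) ≡ (1 + K * m) * (1 + m) [MOD m ^ 2] := by
            rw [h1]; exact ih.mul_right _
      _ ≡ 1 + (K + 1) * m [MOD m ^ 2] := by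
            rw [h2]
            show (1 + (K + 1) * m + m ^ 2 * K) % m ^ 2 = (1 + (K + 1) * m) % m ^ 2
            exact Nat.add_mul_mod_self_left _ _ _

/-- Digits below `n` only depend on the value mod `10 ^ n`. -/
private lemma aux_digit_eq {X Y n m : ℕ} (h : X ≡ Y [MOD 10 ^ n]) (hm : m < n) :
    X / 10 ^ m % 10 = Y / 10 ^ m % 10 := by
  have h1 : X ≡ Y [MOD 10 ^ (m + 1)] := h.of_dvd (pow_dvd_pow 10 hm)
  rw [← Nat.mod_mul_right_div_self, ← Nat.mod_mul_right_div_self, ← pow_succ]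
  rw [Nat.ModEq] at h1; rw [h1]

/-- Decomposition of a value mod `10 ^ (n+1)` into low part and top digit. -/
private lemma aux_decomp (X n : ℕ) :
    X % 10 ^ (n + 1) = X % 10 ^ n + 10 ^ n * (X / 10 ^ n % 10) := by
  rw [pow_succ]; exact Nat.mod_mul

private lemma aux_two_ne : (2 : ZMod 5) ≠ 0 := by decide

/-- Greedy strategy: among all exponents `q` preserving the digits of `2^p` up to
position `d'` (i.e. agreeing mod `10^(d'+1)`) and having only zero digits strictly
between position `d'` and the position `e` of the next nonzero digit, the chosen
exponent `p` maximizes the gap, i.e. every such `e` satisfies `e ≤ d`. Then the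
nonzero digit of `2^p` at position `d` (beyond the units digit) is odd. -/
theorem stmt_11 (d' d p : ℕ) (hd : d' < d) (hp : d < p)
    (hzeros : ∀ m, d' < m → m < d → (2 ^ p / 10 ^ m) % 10 = 0)
    (hb : (2 ^ p / 10 ^ d) % 10 ≠ 0)
    (hmax : ∀ q e, e < q → 2 ^ q ≡ 2 ^ p [MOD 10 ^ (d' + 1)] →
      (∀ m, d' < m → m < e → (2 ^ q / 10 ^ m) % 10 = 0) →
      (2 ^ q / 10 ^ e) % 10 ≠ 0 → e ≤ d) :
    (2 ^ p / 10 ^ d) % 10 % 2 = 1 := by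
  by_contra hpar
  obtain ⟨c, rfl⟩ : ∃ c, d = c + 1 := ⟨d - 1, by omega⟩
  haveI : Fact (Nat.Prime 5) := ⟨by norm_num⟩
  have h2ne : (2 : ZMod 5) ≠ 0 := aux_two_ne
  set b : ℕ := 2 ^ p / 10 ^ (c + 1) % 10 with hbdef
  have hb2 : b % 2 = 0 := by omega
  have hb10 : b < 10 := Nat.mod_lt _ (by norm_num)
  obtain ⟨a, ha, hna⟩ := aux_pow_five c
  set T : ℕ := 4 * 5 ^ c with hTdef
  set r : ℕ := 2 ^ p % 10 ^ (c + 1) with hrdef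
  set s : ℕ := 2 ^ p % 10 ^ (c + 2) with hsdef
  have hsdec : s = r + 10 ^ (c + 1) * b := aux_decomp (2 ^ p) (c + 1)
  -- generic facts about 2 ^ (p + K * T)
  have key : ∀ K : ℕ,
      (2 ^ (p + K * T) ≡ 2 ^ p [MOD 10 ^ (c + 1)]) ∧
      ((2 : ℤ) ∣ ((2 ^ (p + K * T) / 10 ^ (c + 1) % 10 : ℕ) : ℤ) - (b : ℤ)) ∧
      (((2 : ZMod 5) ^ (c + 1)) * (((2 ^ (p + K * T) / 10 ^ (c + 1) % 10 : ℕ) : ZMod 5) - b)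
        = (s : ZMod 5) * K * a) := by
    intro K
    set q : ℕ := p + K * T with hqdef
    set X : ℕ := 2 ^ q with hXdef
    set cK : ℕ := X / 10 ^ (c + 1) % 10 with hcKdef
    have hXfac : X = 2 ^ p * (1 + 5 ^ (c + 1) * a) ^ K := by
      rw [hXdef, hqdef, pow_add, mul_comm K T, pow_mul, ha]
    -- mod 5 ^ (c+2)
    have hbin : (1 + 5 ^ (c + 1) * a) ^ K ≡ 1 + K * (5 ^ (c + 1) * a) [MOD 5 ^ (c + 2)] := by
      refine (aux_one_add_pow _ K).of_dvd ?_
      have : (5 : ℕ) ^ (c + 2) ∣ (5 ^ (c + 1)) ^ 2 := by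
        rw [← pow_mul]; exact pow_dvd_pow 5 (by omega)
      calc (5 : ℕ) ^ (c + 2) ∣ (5 ^ (c + 1)) ^ 2 := this
        _ ∣ (5 ^ (c + 1) * a) ^ 2 := pow_dvd_pow_of_dvd (dvd_mul_right _ _) 2
    have hX5 : X ≡ 2 ^ p * (1 + K * (5 ^ (c + 1) * a)) [MOD 5 ^ (c + 2)] := by
      rw [hXfac]; exact hbin.mul_left _
    -- mod 5 ^ (c+1)
    have hX5d : X ≡ 2 ^ p [MOD 5 ^ (c + 1)] := by
      have h1 : (1 + K * (5 ^ (c + 1) * a)) ≡ 1 [MOD 5 ^ (c + 1)] := by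
        symm
        refine (Nat.modEq_iff_dvd' (by omega)).2 ?_
        simpa using ⟨K * a, by ring⟩
      calc X ≡ 2 ^ p * (1 + K * (5 ^ (c + 1) * a)) [MOD 5 ^ (c + 1)] :=
              hX5.of_dvd (pow_dvd_pow 5 (by omega))
        _ ≡ 2 ^ p * 1 [MOD 5 ^ (c + 1)] := h1.mul_left _
        _ = 2 ^ p := mul_one _
    -- powers of 2 divide
    have hq2 : c + 2 ≤ q := by omega
    have hX2 : (2 : ℕ) ^ (c + 2) ∣ X := by rw [hXdef]; exact pow_dvd_pow 2 hq2
    have hp2 : (2 : ℕ) ^ (c + 2) ∣ 2 ^ p := pow_dvd_pow 2 (by omega)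
    -- F1 : mod 10 ^ (c+1)
    have hF1 : X ≡ 2 ^ p [MOD 10 ^ (c + 1)] := by
      have h2 : X ≡ 2 ^ p [MOD 2 ^ (c + 1)] := by
        have hx : X ≡ 0 [MOD 2 ^ (c + 1)] :=
          Nat.modEq_zero_iff_dvd.2 ((pow_dvd_pow 2 (by omega)).trans hX2)
        have hy : 2 ^ p ≡ 0 [MOD 2 ^ (c + 1)] :=
          Nat.modEq_zero_iff_dvd.2 ((pow_dvd_pow 2 (by omega)).trans hp2)
        exact hx.trans hy.symm
      have hco : Nat.Coprime (2 ^ (c + 1)) (5 ^ (c + 1)) :=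
        Nat.Coprime.pow _ _ (by norm_num)
      have := (Nat.modEq_and_modEq_iff_modEq_mul hco).1 ⟨h2, hX5d⟩
      rwa [← mul_pow] at this
    have hXdec : X % 10 ^ (c + 2) = r + 10 ^ (c + 1) * cK := by
      rw [aux_decomp X (c + 1), hF1]
    refine ⟨hF1, ?_, ?_⟩
    -- F2 : parity
    · have hdx : (2 : ℕ) ^ (c + 2) ∣ X % 10 ^ (c + 2) :=
        (Nat.dvd_mod_iff (pow_dvd_pow_of_dvd (by norm_num) _)).2 hX2
      have hdy : (2 : ℕ) ^ (c + 2) ∣ s :=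
        (Nat.dvd_mod_iff (pow_dvd_pow_of_dvd (by norm_num) _)).2 hp2
      rw [hXdec] at hdx
      rw [hsdec] at hdy
      have hz : (2 : ℤ) ^ (c + 2) ∣ (10 : ℤ) ^ (c + 1) * ((cK : ℤ) - b) := by
        have hx' : (2 : ℤ) ^ (c + 2) ∣ ((r : ℤ) + 10 ^ (c + 1) * cK) := by
          exact_mod_cast Int.natCast_dvd_natCast.2 hdx
        have hy' : (2 : ℤ) ^ (c + 2) ∣ ((r : ℤ) + 10 ^ (c + 1) * b) := by
          exact_mod_cast Int.natCast_dvd_natCast.2 hdy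
        have := dvd_sub hx' hy'
        convert this using 1
        · rfl
        ring
      have h2' : (2 : ℤ) ∣ (5 : ℤ) ^ (c + 1) * ((cK : ℤ) - b) := by
        have hrw : (10 : ℤ) ^ (c + 1) * ((cK : ℤ) - b)
            = 2 ^ (c + 1) * (5 ^ (c + 1) * ((cK : ℤ) - b)) := by
          rw [show (10 : ℤ) = 2 * 5 by norm_num, mul_pow]; ring
        have hrw2 : (2 : ℤ) ^ (c + 2) = 2 ^ (c + 1) * 2 := by ring
        rw [hrw, hrw2] at hz
        exact (mul_dvd_mul_iff_left (a := (2:ℤ) ^ (c+1)) (by positivity)).1 hz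
      rcases (Int.prime_two.dvd_mul.1 h2') with h | h
      · exact absurd (Int.prime_two.dvd_of_dvd_pow h) (by norm_num)
      · exact h
    -- F3 : mod 5 relation
    · have hm1 : X % 10 ^ (c + 2) ≡ X [MOD 5 ^ (c + 2)] :=
        (Nat.mod_modEq X (10 ^ (c + 2))).of_dvd
          (pow_dvd_pow_of_dvd (by norm_num) _)
      have hm2 : s ≡ 2 ^ p [MOD 5 ^ (c + 2)] :=
        (Nat.mod_modEq (2 ^ p) (10 ^ (c + 2))).of_dvd
          (pow_dvd_pow_of_dvd (by norm_num) _)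
      have hcong : (r + 10 ^ (c + 1) * cK : ℕ)
          ≡ s * (1 + K * (5 ^ (c + 1) * a)) [MOD 5 ^ (c + 2)] := by
        calc (r + 10 ^ (c + 1) * cK : ℕ) = X % 10 ^ (c + 2) := hXdec.symm
          _ ≡ X [MOD 5 ^ (c + 2)] := hm1
          _ ≡ 2 ^ p * (1 + K * (5 ^ (c + 1) * a)) [MOD 5 ^ (c + 2)] := hX5
          _ ≡ s * (1 + K * (5 ^ (c + 1) * a)) [MOD 5 ^ (c + 2)] :=
              (hm2.symm).mul_right _
      -- move to ℤ and cancel 5 ^ (c+1)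
      have hzd : (5 : ℤ) ^ (c + 2) ∣
          ((s : ℤ) * (1 + K * (5 ^ (c + 1) * a)) - ((r : ℤ) + 10 ^ (c + 1) * cK)) := by
        have := hcong.dvd
        exact_mod_cast this
      have h5 : (5 : ℤ) ∣ ((s : ℤ) * K * a + 2 ^ (c + 1) * ((b : ℤ) - cK)) := by
        have hrw : ((s : ℤ) * (1 + K * (5 ^ (c + 1) * a)) - ((r : ℤ) + 10 ^ (c + 1) * cK))
            = 5 ^ (c + 1) * ((s : ℤ) * K * a + 2 ^ (c + 1) * ((b : ℤ) - cK)) := by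
          rw [hsdec]
          push_cast
          rw [show (10 : ℤ) = 2 * 5 by norm_num, mul_pow]
          ring
        rw [hrw, show (5 : ℤ) ^ (c + 2) = 5 ^ (c + 1) * 5 by ring] at hzd
        exact (mul_dvd_mul_iff_left (a := (5:ℤ) ^ (c+1)) (by positivity)).1 hzd
      have h50 : (((s : ℤ) * K * a + 2 ^ (c + 1) * ((b : ℤ) - cK) : ℤ) : ZMod 5) = 0 :=
        (ZMod.intCast_zmod_eq_zero_iff_dvd _ 5).2 h5
      push_cast at h50
      linear_combination (-1 : ZMod 5) * h50
  -- nonvanishing facts in ZMod 5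
  have hs5 : (s : ZMod 5) ≠ 0 := by
    have : (s : ZMod 5) = ((2 ^ p : ℕ) : ZMod 5) :=
      (ZMod.natCast_eq_natCast_iff _ _ _).2
        ((Nat.mod_modEq _ _).of_dvd (dvd_pow (by norm_num) (by omega)))
    rw [this]
    push_cast
    exact pow_ne_zero _ h2ne
  have ha5 : (a : ZMod 5) ≠ 0 := fun h => hna ((ZMod.natCast_eq_zero_iff _ _).1 h)
  have h25 : ((2 : ZMod 5) ^ (c + 1)) ≠ 0 := pow_ne_zero _ h2ne
  -- choose K
  set u : ZMod 5 := (s : ZMod 5) * a with hudef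
  have hu : u ≠ 0 := mul_ne_zero hs5 ha5
  set k0 : ZMod 5 := (-(b : ZMod 5)) * 2 ^ (c + 1) * u⁻¹ with hk0def
  set K : ℕ := k0.val + 5 * (c + 2) with hKdef
  have hKcast : ((K : ℕ) : ZMod 5) = k0 := by
    have h5z : ((5 : ℕ) : ZMod 5) = 0 := ZMod.natCast_self 5
    rw [hKdef]
    rw [Nat.cast_add, Nat.cast_mul, h5z, zero_mul, add_zero,
      ZMod.natCast_val, ZMod.cast_id]
  obtain ⟨hF1, hF2, hF3⟩ := key K
  set q : ℕ := p + K * T with hqdef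
  set cK : ℕ := 2 ^ q / 10 ^ (c + 1) % 10 with hcKdef
  -- the digit at position c+1 of 2 ^ q is zero
  have hcK5 : (cK : ZMod 5) = 0 := by
    rw [hKcast] at hF3
    have hstep : (s : ZMod 5) * k0 * a = -(b : ZMod 5) * 2 ^ (c + 1) := by
      rw [hk0def]
      field_simp [hudef]
      ring
    rw [hstep] at hF3
    have : ((2 : ZMod 5) ^ (c + 1)) * (cK : ZMod 5) = 0 := by
      linear_combination hF3
    rcases mul_eq_zero.1 this with h | h
    · exact absurd h h25
    · exact h
  have hcK5' : (5 : ℕ) ∣ cK := (ZMod.natCast_eq_zero_iff _ _).1 hcK5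
  have hcKlt : cK < 10 := Nat.mod_lt _ (by norm_num)
  have hcK0 : cK = 0 := by omega
  -- 2 ^ q is large
  have hT4 : 4 ≤ T := by
    have : 1 ≤ 5 ^ c := Nat.one_le_pow _ _ (by norm_num)
    omega
  have hKbig : 5 * (c + 2) ≤ K := by omega
  have hq4 : 4 * (c + 2) ≤ q := by
    have h1 : (5 * (c + 2)) * 4 ≤ K * T := Nat.mul_le_mul hKbig hT4
    omega
  have hbig : 10 ^ (c + 2) ≤ 2 ^ q := by
    calc (10 : ℕ) ^ (c + 2) ≤ 16 ^ (c + 2) := Nat.pow_le_pow_left (by norm_num) _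
      _ = 2 ^ (4 * (c + 2)) := by rw [pow_mul]; norm_num
      _ ≤ 2 ^ q := Nat.pow_le_pow_right (by norm_num) hq4
  -- the leading digit gives a nonzero digit at a position > c+1
  set L : ℕ := Nat.log 10 (2 ^ q) with hLdef
  have hLle : 10 ^ L ≤ 2 ^ q := Nat.pow_log_le_self 10 (pow_ne_zero _ (by norm_num))
  have hLlt : 2 ^ q < 10 ^ (L + 1) := Nat.lt_pow_succ_log_self (by norm_num) _
  have hLd : c + 1 < L := by
    have : 10 ^ (c + 2) < 10 ^ (L + 1) := lt_of_le_of_lt hbig hLlt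
    have := (Nat.pow_lt_pow_iff_right (by norm_num : 1 < 10)).1 this
    omega
  have hLdig : 2 ^ q / 10 ^ L % 10 ≠ 0 := by
    have h1 : 1 ≤ 2 ^ q / 10 ^ L := (Nat.one_le_div_iff (by positivity)).2 hLle
    have h2 : 2 ^ q / 10 ^ L < 10 := by
      rw [Nat.div_lt_iff_lt_mul (by positivity)]
      calc 2 ^ q < 10 ^ (L + 1) := hLlt
        _ = 10 ^ L * 10 := pow_succ _ _
        _ ≤ 10 * 10 ^ L := by ring_nf; omega
    rw [Nat.mod_eq_of_lt h2]
    omega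
  -- least nonzero digit position above c+1
  have hex : ∃ m, c + 1 < m ∧ 2 ^ q / 10 ^ m % 10 ≠ 0 := ⟨L, hLd, hLdig⟩
  set e : ℕ := Nat.find hex with hedef
  obtain ⟨he1, he2⟩ : c + 1 < e ∧ 2 ^ q / 10 ^ e % 10 ≠ 0 := Nat.find_spec hex
  have hemin : ∀ m, m < e → ¬(c + 1 < m ∧ 2 ^ q / 10 ^ m % 10 ≠ 0) :=
    fun m hm => Nat.find_min hex hm
  -- apply maximality
  have heq : e < q := by
    have h1 : 10 ^ e ≤ 2 ^ q := by
      by_contra h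
      push_neg at h
      exact he2 (by rw [Nat.div_eq_of_lt h])
    have h2 : (2 : ℕ) ^ q < 10 ^ q := Nat.pow_lt_pow_left (by norm_num) (by omega)
    exact (Nat.pow_lt_pow_iff_right (by norm_num : 1 < 10)).1 (lt_of_le_of_lt h1 h2)
  have hmodeq : 2 ^ q ≡ 2 ^ p [MOD 10 ^ (d' + 1)] :=
    hF1.of_dvd (pow_dvd_pow 10 (by omega))
  have hz : ∀ m, d' < m → m < e → 2 ^ q / 10 ^ m % 10 = 0 := by
    intro m hm1 hm2
    rcases lt_trichotomy m (c + 1) with h | h | h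
    · rw [aux_digit_eq hF1 h]
      exact hzeros m hm1 h
    · rw [h]
      exact hcK0
    · have := hemin m hm2
      push_neg at this
      exact this h
  have := hmax q e heq hmodeq hz he2
  omega
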